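/- The Goemans–Williamson constant α = (2/π) · inf_{θ ∈ (0, π]} θ/(1 − cos θ) satisfies 0.87856 < α < 0.87857. -/

import Mathlib

open Real Set

/-! Taylor partial sums for cos and sin -/

noncomputable def csum (n : ℕ) (x : ℝ) : ℝ :=
  ∑ i ∈ Finset.range n, (-1) ^ i * x ^ (2 * i) / ((2 * i).factorial : ℝ)

noncomputable def ssum (n : ℕ) (x : ℝ) : ℝ :=
  ∑ i ∈ Finset.range n, (-1) ^ i * x ^ (2 * i + 1) / ((2 * i + 1).factorial : ℝ)

lemma hasDerivAt_ssum (n : ℕ) (x : ℝ) :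
    HasDerivAt (fun y => ssum n y) (csum n x) x := by
  have h : ∀ i ∈ Finset.range n,
      HasDerivAt (fun y : ℝ => (-1) ^ i * y ^ (2 * i + 1) / ((2 * i + 1).factorial : ℝ))
        ((-1) ^ i * x ^ (2 * i) / ((2 * i).factorial : ℝ)) x := by
    intro i _
    have h1 : HasDerivAt (fun y : ℝ => y ^ (2 * i + 1)) ((2 * i + 1) * x ^ (2 * i)) x := by
      simpa using hasDerivAt_pow (2 * i + 1) x
    have h2 := (h1.const_mul ((-1 : ℝ) ^ i)).div_const ((2 * i + 1).factorial : ℝ)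
    refine h2.congr_deriv ?_
    have hf : ((2 * i).factorial : ℝ) ≠ 0 := Nat.cast_ne_zero.2 (2 * i).factorial_ne_zero
    have hf2 : ((2 * i + 1).factorial : ℝ) = (2 * i + 1) * ((2 * i).factorial : ℝ) := by
      rw [Nat.factorial_succ]; push_cast; ring
    rw [hf2]
    field_simp
  have := HasDerivAt.fun_sum h
  simpa [ssum, csum] using this

lemma hasDerivAt_csum (n : ℕ) (x : ℝ) :
    HasDerivAt (fun y => csum (n + 1) y) (-ssum n x) x := by
  have h : ∀ i ∈ Finset.range (n + 1),
      HasDerivAt (fun y : ℝ => (-1) ^ i * y ^ (2 * i) / ((2 * i).factorial : ℝ))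
        ((-1 : ℝ) ^ i * ((2 * i : ℕ) * x ^ (2 * i - 1)) / ((2 * i).factorial : ℝ)) x := by
    intro i _
    exact ((hasDerivAt_pow (2 * i) x).const_mul ((-1 : ℝ) ^ i)).div_const _
  have hsum := HasDerivAt.fun_sum h
  have key : ∑ i ∈ Finset.range (n + 1),
      (-1 : ℝ) ^ i * ((2 * i : ℕ) * x ^ (2 * i - 1)) / ((2 * i).factorial : ℝ) = -ssum n x := by
    rw [Finset.sum_range_succ']
    have hterm : ∀ i ∈ Finset.range n,
        (-1 : ℝ) ^ (i + 1) * ((2 * (i + 1) : ℕ) * x ^ (2 * (i + 1) - 1)) /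
          ((2 * (i + 1)).factorial : ℝ)
        = -((-1) ^ i * x ^ (2 * i + 1) / ((2 * i + 1).factorial : ℝ)) := by
      intro i _
      have hf : ((2 * i + 1).factorial : ℝ) ≠ 0 := Nat.cast_ne_zero.2 (2 * i + 1).factorial_ne_zero
      have h21 : 2 * (i + 1) - 1 = 2 * i + 1 := by omega
      have h2f : ((2 * (i + 1)).factorial : ℝ) = (2 * i + 2) * ((2 * i + 1).factorial : ℝ) := by
        have he : 2 * (i + 1) = (2 * i + 1) + 1 := by ring
        rw [he, Nat.factorial_succ]; push_cast; ring
      rw [h21, h2f]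
      have hc : ((2 * (i + 1) : ℕ) : ℝ) = 2 * i + 2 := by push_cast; ring
      rw [hc]
      rw [pow_succ]
      field_simp
    rw [Finset.sum_congr rfl hterm]
    simp [ssum]
  rw [key] at hsum
  simpa only [csum] using hsum

lemma nonneg_of_deriv {u u' : ℝ → ℝ} (hd : ∀ x, HasDerivAt u (u' x) x)
    (h0 : u 0 = 0) (hp : ∀ x, 0 ≤ x → 0 ≤ u' x) {x : ℝ} (hx : 0 ≤ x) : 0 ≤ u x := by
  have hm : MonotoneOn u (Set.Ici 0) := by
    refine monotoneOn_of_deriv_nonneg (convex_Ici 0)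
      (fun y _ => ((hd y).continuousAt).continuousWithinAt)
      (fun y _ => ((hd y).differentiableAt).differentiableWithinAt) ?_
    intro y hy
    rw [(hd y).deriv]
    rw [interior_Ici] at hy
    exact hp y hy.le
  have := hm Set.self_mem_Ici (show x ∈ Set.Ici 0 from hx) hx
  rwa [h0] at this

lemma ssum_zero (n : ℕ) : ssum n 0 = 0 := by
  simp [ssum]

lemma csum_succ_zero (n : ℕ) : csum (n + 1) 0 = 1 := by
  rw [csum, Finset.sum_range_succ']
  have h : ∀ i ∈ Finset.range n,
      (-1 : ℝ) ^ (i + 1) * (0 : ℝ) ^ (2 * (i + 1)) / ((2 * (i + 1)).factorial : ℝ) = 0 := by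
    intro i _
    rw [zero_pow (by omega)]
    ring
  rw [Finset.sum_congr rfl h]
  simp

lemma cos_sin_bound : ∀ n : ℕ,
    (∀ x : ℝ, 0 ≤ x → 0 ≤ (-1) ^ (n + 1) * (Real.cos x - csum (n + 1) x)) ∧
    (∀ x : ℝ, 0 ≤ x → 0 ≤ (-1) ^ (n + 1) * (Real.sin x - ssum (n + 1) x)) := by
  have hB : ∀ n : ℕ, (∀ x : ℝ, 0 ≤ x → 0 ≤ (-1) ^ (n + 1) * (Real.cos x - csum (n + 1) x)) →
      (∀ x : ℝ, 0 ≤ x → 0 ≤ (-1) ^ (n + 1) * (Real.sin x - ssum (n + 1) x)) := by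
    intro n hA x hx
    refine nonneg_of_deriv (u := fun y => (-1) ^ (n + 1) * (Real.sin y - ssum (n + 1) y))
      (u' := fun y => (-1) ^ (n + 1) * (Real.cos y - csum (n + 1) y))
      ?_ ?_ (fun y hy => hA y hy) hx
    · intro y
      exact ((Real.hasDerivAt_sin y).sub (hasDerivAt_ssum (n + 1) y)).const_mul _
    · simp [ssum_zero]
  have hA : ∀ n : ℕ, (∀ x : ℝ, 0 ≤ x → 0 ≤ (-1) ^ (n + 1) * (Real.sin x - ssum (n + 1) x)) →
      (∀ x : ℝ, 0 ≤ x → 0 ≤ (-1) ^ (n + 2) * (Real.cos x - csum (n + 2) x)) := by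
    intro n hBn x hx
    refine nonneg_of_deriv (u := fun y => (-1) ^ (n + 2) * (Real.cos y - csum (n + 2) y))
      (u' := fun y => (-1) ^ (n + 1) * (Real.sin y - ssum (n + 1) y))
      ?_ ?_ (fun y hy => hBn y hy) hx
    · intro y
      have h := ((Real.hasDerivAt_cos y).sub (hasDerivAt_csum (n + 1) y)).const_mul
        ((-1 : ℝ) ^ (n + 2))
      refine h.congr_deriv (Eq.symm ?_)
      show (-1 : ℝ) ^ (n + 1) * (Real.sin y - ssum (n + 1) y)
        = (-1) ^ (n + 2) * (-Real.sin y - -ssum (n + 1) y)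
      rw [pow_succ]
      ring
    · simp [csum_succ_zero]
  intro n
  induction n with
  | zero =>
    constructor
    · intro x hx
      have h1 : csum 1 x = 1 := by simp [csum]
      simp only [zero_add, pow_one, h1]
      nlinarith [Real.cos_le_one x]
    · intro x hx
      have h1 : ssum 1 x = x := by simp [ssum]
      simp only [zero_add, pow_one, h1]
      nlinarith [Real.sin_le hx]
  | succ m ih =>
    have hAm := hA m (hB m ih.1)
    exact ⟨hAm, hB (m + 1) hAm⟩

lemma cos_ge_csum8 {x : ℝ} (hx : 0 ≤ x) : csum 8 x ≤ Real.cos x := by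
  have h := (cos_sin_bound 7).1 x hx
  norm_num at h
  linarith

lemma cos_le_csum9 {x : ℝ} (hx : 0 ≤ x) : Real.cos x ≤ csum 9 x := by
  have h := (cos_sin_bound 8).1 x hx
  norm_num at h
  linarith

lemma sin_ge_ssum8 {x : ℝ} (hx : 0 ≤ x) : ssum 8 x ≤ Real.sin x := by
  have h := (cos_sin_bound 7).2 x hx
  norm_num at h
  linarith

lemma sin_le_ssum7 {x : ℝ} (hx : 0 ≤ x) : Real.sin x ≤ ssum 7 x := by
  have h := (cos_sin_bound 6).2 x hx
  norm_num at h
  linarith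

/-! Numeric key facts -/

lemma key_i : (1 : ℝ) ≤ 1.38004 * Real.sin 2.3306 := by
  have h := sin_ge_ssum8 (show (0:ℝ) ≤ 2.3306 by norm_num)
  have h2 : (1 : ℝ) ≤ 1.38004 * ssum 8 (2.3306 : ℝ) := by
    simp only [ssum, Finset.sum_range_succ, Finset.sum_range_zero]
    norm_num [Nat.factorial]
  nlinarith

lemma key_ii : (1.38004 : ℝ) * Real.sin 2.3306 ≤ 1.0045 := by
  have h := sin_le_ssum7 (show (0:ℝ) ≤ 2.3306 by norm_num)
  have h2 : (1.38004 : ℝ) * ssum 7 (2.3306 : ℝ) ≤ 1.0045 := by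
    simp only [ssum, Finset.sum_range_succ, Finset.sum_range_zero]
    norm_num [Nat.factorial]
  nlinarith

lemma key_iii : (1.38004 : ℝ) * Real.sin 2.3316 ≤ 1 := by
  have h := sin_le_ssum7 (show (0:ℝ) ≤ 2.3316 by norm_num)
  have h2 : (1.38004 : ℝ) * ssum 7 (2.3316 : ℝ) ≤ 1 := by
    simp only [ssum, Finset.sum_range_succ, Finset.sum_range_zero]
    norm_num [Nat.factorial]
  nlinarith

lemma key_iv : (1.38004 : ℝ) * (1 - Real.cos 2.3306) + 0.0000045 ≤ 2.3306 := by
  have h := cos_ge_csum8 (show (0:ℝ) ≤ 2.3306 by norm_num)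
  have h2 : (1.38004 : ℝ) * (1 - csum 8 (2.3306 : ℝ)) + 0.0000045 ≤ 2.3306 := by
    simp only [csum, Finset.sum_range_succ, Finset.sum_range_zero]
    norm_num [Nat.factorial]
  nlinarith

lemma key_B : (2.3311 : ℝ) < 0.87857 * 3.141592 / 2 * (1 - csum 9 (2.3311 : ℝ)) := by
  simp only [csum, Finset.sum_range_succ, Finset.sum_range_zero]
  norm_num [Nat.factorial]

/-! sin is antitone on [π/2, π] -/

lemma sin_anti {a b : ℝ} (ha : Real.pi / 2 ≤ a) (hab : a ≤ b) (hb : b ≤ Real.pi) :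
    Real.sin b ≤ Real.sin a := by
  rw [← Real.cos_sub_pi_div_two a, ← Real.cos_sub_pi_div_two b]
  apply Real.cos_le_cos_of_nonneg_of_le_pi
  · linarith
  · linarith [Real.pi_pos]
  · linarith

/-! The global inequality 1.38004 * (1 - cos θ) ≤ θ on (0, π] -/

noncomputable def gfun (t : ℝ) : ℝ := t - 1.38004 * (1 - Real.cos t)

lemma gfun_hasDeriv (y : ℝ) : HasDerivAt gfun (1 - 1.38004 * Real.sin y) y := by
  have h1 : HasDerivAt (fun t : ℝ => 1 - Real.cos t) (Real.sin y) y := by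
    simpa using (Real.hasDerivAt_cos y).const_sub 1
  have h2 := (hasDerivAt_id y).sub (h1.const_mul (1.38004 : ℝ))
  exact h2

lemma g_lower : ∀ θ ∈ Set.Ioc (0:ℝ) Real.pi, 1.38004 * (1 - Real.cos θ) ≤ θ := by
  have hπl : (3.141592 : ℝ) < Real.pi := Real.pi_gt_d6
  have hπu : Real.pi < 3.141593 := Real.pi_lt_d6
  have hcont : ∀ s : Set ℝ, ContinuousOn gfun s :=
    fun s => fun y _ => (gfun_hasDeriv y).continuousAt.continuousWithinAt
  have hdiff : ∀ s : Set ℝ, DifferentiableOn ℝ gfun s :=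
    fun s => fun y _ => (gfun_hasDeriv y).differentiableAt.differentiableWithinAt
  -- antitone piece [1.449, 2.3306]
  have hanti : AntitoneOn gfun (Set.Icc 1.449 2.3306) := by
    refine antitoneOn_of_deriv_nonpos (convex_Icc _ _) (hcont _) ((hdiff _).mono interior_subset) ?_
    intro y hy
    rw [interior_Icc] at hy
    rw [(gfun_hasDeriv y).deriv]
    rcases le_or_gt y (Real.pi / 2) with hc1 | hc1
    · have hs := Real.mul_le_sin (by linarith [hy.1] : (0:ℝ) ≤ y) hc1
      have h5 : (0.92 : ℝ) ≤ Real.sin y := by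
        have h6 : (2 : ℝ) / Real.pi * 1.449 ≤ 2 / Real.pi * y := by
          have : (0:ℝ) ≤ 2 / Real.pi := by positivity
          nlinarith [hy.1]
        have h7 : (0.92 : ℝ) ≤ 2 / Real.pi * 1.449 := by
          rw [div_mul_eq_mul_div, le_div_iff₀ Real.pi_pos]
          nlinarith
        linarith
      nlinarith
    · have hs : Real.sin 2.3306 ≤ Real.sin y := sin_anti hc1.le hy.2.le (by linarith)
      nlinarith [key_i]
  -- monotone-with-slack piece [2.3306, 2.3316]
  have hmono1 : MonotoneOn (fun t => gfun t + 0.0045 * t) (Set.Icc 2.3306 2.3316) := by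
    refine monotoneOn_of_deriv_nonneg (convex_Icc _ _) ?_ ?_ ?_
    · exact fun y hy => ((gfun_hasDeriv y).add ((hasDerivAt_id y).const_mul
        (0.0045:ℝ))).continuousAt.continuousWithinAt
    · exact fun y hy => ((gfun_hasDeriv y).add ((hasDerivAt_id y).const_mul
        (0.0045:ℝ))).differentiableAt.differentiableWithinAt
    · intro y hy
      rw [interior_Icc] at hy
      have hd : HasDerivAt (fun t => gfun t + 0.0045 * t) (1 - 1.38004 * Real.sin y + 0.0045) y := by
        have := (gfun_hasDeriv y).add ((hasDerivAt_id y).const_mul (0.0045:ℝ))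
        refine this.congr_deriv ?_
        ring
      rw [hd.deriv]
      have hs : Real.sin y ≤ Real.sin 2.3306 := by
        apply sin_anti (by linarith) hy.1.le (by linarith [hy.2])
      nlinarith [key_ii]
  -- monotone piece [2.3316, π]
  have hmono2 : MonotoneOn gfun (Set.Icc 2.3316 Real.pi) := by
    refine monotoneOn_of_deriv_nonneg (convex_Icc _ _) (hcont _)
      ((hdiff _).mono interior_subset) ?_
    intro y hy
    rw [interior_Icc] at hy
    rw [(gfun_hasDeriv y).deriv]
    have hs : Real.sin y ≤ Real.sin 2.3316 := by
      apply sin_anti (by linarith) hy.1.le hy.2.le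
    nlinarith [key_iii]
  -- value at 2.3306
  have hg1 : 0.0000045 ≤ gfun 2.3306 := by
    have := key_iv
    simp only [gfun]
    linarith
  -- value bound on [2.3306, 2.3316]
  have hmid : ∀ θ : ℝ, 2.3306 ≤ θ → θ ≤ 2.3316 → 0 ≤ gfun θ := by
    intro θ hθa hθb
    have h := hmono1 (Set.mem_Icc.2 ⟨le_refl _, by norm_num⟩) (Set.mem_Icc.2 ⟨hθa, hθb⟩) hθa
    simp only at h
    linarith
  intro θ hθ
  obtain ⟨hθ0, hθπ⟩ := hθ
  have key : 0 ≤ gfun θ := by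
    rcases le_or_gt θ 1.449 with h1 | h1
    · have hc : 1 - θ ^ 2 / 2 ≤ Real.cos θ := Real.one_sub_sq_div_two_le_cos
      have h4 : (1.38004:ℝ) * θ ≤ 2 := by nlinarith
      simp only [gfun]
      nlinarith [mul_nonneg hθ0.le (sub_nonneg.2 h4)]
    · rcases le_or_gt θ 2.3306 with h2 | h2
      · have h := hanti (Set.mem_Icc.2 ⟨h1.le, h2⟩)
          (Set.mem_Icc.2 ⟨by norm_num, le_refl _⟩) h2
        linarith
      · rcases le_or_gt θ 2.3316 with h3 | h3
        · exact hmid θ h2.le h3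
        · have hmidv : 0 ≤ gfun 2.3316 := hmid 2.3316 (by norm_num) (le_refl _)
          have h := hmono2 (Set.mem_Icc.2 ⟨le_refl _, by linarith⟩)
            (Set.mem_Icc.2 ⟨h3.le, hθπ⟩) h3.le
          linarith
  simp only [gfun] at key
  linarith

/-- The Goemans-Williamson constant `α = (2/π) · inf_{θ ∈ (0, π]} θ/(1 − cos θ)`. -/
noncomputable def gwAlpha : ℝ :=
  (2 / Real.pi) * ⨅ θ : Set.Ioc (0 : ℝ) Real.pi, (θ : ℝ) / (1 - Real.cos θ)

theorem gwAlpha_bounds : 0.87856 < gwAlpha ∧ gwAlpha < 0.87857 := by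
  have hπ0 : (0:ℝ) < Real.pi := Real.pi_pos
  have hπl : (3.141592 : ℝ) < Real.pi := Real.pi_gt_d6
  have hπu : Real.pi < 3.141593 := Real.pi_lt_d6
  set S : Set.Ioc (0:ℝ) Real.pi → ℝ := fun θ => (θ : ℝ) / (1 - Real.cos θ) with hS
  have hcos_lt : ∀ θ : ℝ, θ ∈ Set.Ioc (0:ℝ) Real.pi → Real.cos θ < 1 := by
    intro θ hθ
    have := Real.strictAntiOn_cos (Set.mem_Icc.2 ⟨le_refl 0, hπ0.le⟩)
      (Set.mem_Icc.2 ⟨hθ.1.le, hθ.2⟩) hθ.1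
    simpa using this
  have hlow : ∀ θ : Set.Ioc (0:ℝ) Real.pi, (1.38004:ℝ) ≤ S θ := by
    rintro ⟨θ, hθ⟩
    have hg := g_lower θ hθ
    have hc := hcos_lt θ hθ
    simp only [hS]
    rw [le_div_iff₀ (by linarith)]
    linarith
  have hne : Nonempty (Set.Ioc (0:ℝ) Real.pi) := ⟨⟨Real.pi, Set.mem_Ioc.2 ⟨hπ0, le_refl _⟩⟩⟩
  have hbdd : BddBelow (Set.range S) := ⟨1.38004, by rintro _ ⟨θ, rfl⟩; exact hlow θ⟩
  have hK1 : (1.38004:ℝ) ≤ ⨅ θ, S θ := le_ciInf hlow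
  have hθ0mem : (2.3311:ℝ) ∈ Set.Ioc (0:ℝ) Real.pi := Set.mem_Ioc.2 ⟨by norm_num, by linarith⟩
  have hK2 : (⨅ θ, S θ) ≤ S ⟨2.3311, hθ0mem⟩ := ciInf_le hbdd _
  have hup : S ⟨2.3311, hθ0mem⟩ < 0.87857 * Real.pi / 2 := by
    have hcu := cos_le_csum9 (show (0:ℝ) ≤ 2.3311 by norm_num)
    have hB := key_B
    have hc := hcos_lt 2.3311 hθ0mem
    have h1 : (2.3311:ℝ) < 0.87857 * 3.141592 / 2 * (1 - Real.cos 2.3311) := by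
      nlinarith
    simp only [hS]
    rw [div_lt_iff₀ (by linarith)]
    have h2 : (0.87857:ℝ) * 3.141592 / 2 * (1 - Real.cos 2.3311) ≤
        0.87857 * Real.pi / 2 * (1 - Real.cos 2.3311) := by
      nlinarith
    linarith
  have hgw : gwAlpha = 2 * (⨅ θ, S θ) / Real.pi := by
    rw [gwAlpha]
    ring
  constructor
  · rw [hgw, lt_div_iff₀ hπ0]
    nlinarith
  · rw [hgw, div_lt_iff₀ hπ0]
    nlinarith
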